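/- For every d-dimensional convex body K, the separable Hadwiger number satisfies H_sep(K) ≥ 2d: there exist 2d translates of K, all touching K, such that these translates together with K form a totally separable packing. -/

import Mathlib

open scoped Pointwise
open Module

/-- If `f ≤ M` on `K` and `f u > 0`, then `f < M` on the interior of `K`. -/
private lemma strict_lt_of_interior' {E : Type*} [NormedAddCommGroup E] [NormedSpace ℝ E]
    {K : Set E} {f : E →L[ℝ] ℝ} {u : E} (hu : 0 < f u) {M : ℝ}
    (hM : ∀ y ∈ K, f y ≤ M) {x : E} (hx : x ∈ interior K) : f x < M := by
  rw [mem_interior_iff_mem_nhds, Metric.mem_nhds_iff] at hx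
  obtain ⟨ε, hε, hball⟩ := hx
  have hu0 : u ≠ 0 := by rintro rfl; simp at hu
  have hnu : 0 < ‖u‖ := norm_pos_iff.mpr hu0
  set δ : ℝ := ε / (2 * ‖u‖) with hδdef
  have hδ0 : 0 < δ := by positivity
  have hy : x + δ • u ∈ K := by
    apply hball
    have h1 : ‖x + δ • u - x‖ = δ * ‖u‖ := by
      rw [add_sub_cancel_left, norm_smul, Real.norm_of_nonneg hδ0.le]
    have h2 : δ * ‖u‖ = ε / 2 := by
      rw [hδdef]
      field_simp
    simp only [Metric.mem_ball, dist_eq_norm, h1, h2]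
    linarith
  have h3 : f x + δ * f u ≤ M := by
    have := hM _ hy
    simpa [map_add, map_smul, smul_eq_mul] using this
  nlinarith

/-- Conjugate diameter system: chords `c k = P k - Q k` of `K` maximizing the determinant,
with cofactor functionals `f k`. -/
private lemma exists_conjugate_system {d : ℕ} {E : Type*} [NormedAddCommGroup E]
    [NormedSpace ℝ E] [FiniteDimensional ℝ E] (hd : Module.finrank ℝ E = d)
    {K : Set E} (hcomp : IsCompact K) (hint : (interior K).Nonempty) :
    ∃ (c : Fin d → E) (f : Fin d → (E →L[ℝ] ℝ)) (P Q : Fin d → E),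
      (∀ k, P k ∈ K) ∧ (∀ k, Q k ∈ K) ∧ (∀ k, P k = Q k + c k) ∧
      (∀ k, 0 < f k (c k)) ∧
      (∀ k j, j ≠ k → f k (c j) = 0) ∧
      (∀ k, ∀ x ∈ K, f k x ≤ f k (P k)) ∧
      (∀ k, ∀ x ∈ K, f k (Q k) ≤ f k x) := by
  classical
  let b : Basis (Fin d) ℝ E := (Module.finBasis ℝ E).reindex (finCongr hd)
  set Δ : (Fin d → E) × (Fin d → E) → ℝ := fun pq => b.det (fun k => pq.1 k - pq.2 k) with hΔ
  have hΔcont : Continuous Δ := by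
    have h1 : ∀ i : Fin d, Continuous fun x : E => b.repr x i := fun i =>
      (b.coord i).continuous_of_finiteDimensional
    have h2 : Continuous fun pq : (Fin d → E) × (Fin d → E) =>
        Matrix.of (fun i j : Fin d => b.repr (pq.1 j - pq.2 j) i) := by
      apply continuous_matrix
      intro i j
      exact (h1 i).comp (((continuous_apply j).comp continuous_fst).sub
        ((continuous_apply j).comp continuous_snd))
    have h3 := h2.matrix_det
    convert h3 using 1
    funext pq
    exact Basis.det_apply _ _
  have hKne : K.Nonempty := hint.mono interior_subset
  set S : Set ((Fin d → E) × (Fin d → E)) :=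
    (Set.univ.pi fun _ => K) ×ˢ (Set.univ.pi fun _ => K) with hS
  have hScomp : IsCompact S :=
    (isCompact_univ_pi fun _ => hcomp).prod (isCompact_univ_pi fun _ => hcomp)
  have hSne : S.Nonempty := by
    obtain ⟨x, hx⟩ := hKne
    exact ⟨(fun _ => x, fun _ => x), ⟨fun k _ => hx, fun k _ => hx⟩⟩
  obtain ⟨⟨P, Q⟩, hPQS, hmax⟩ := hScomp.exists_isMaxOn hSne hΔcont.continuousOn
  have hP : ∀ k, P k ∈ K := fun k => hPQS.1 k (Set.mem_univ k)
  have hQ : ∀ k, Q k ∈ K := fun k => hPQS.2 k (Set.mem_univ k)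
  set c : Fin d → E := fun k => P k - Q k with hc
  set D : ℝ := b.det c with hD
  have hΔPQ : Δ (P, Q) = D := rfl
  have hDpos : 0 < D := by
    obtain ⟨x0, hx0⟩ := hint
    rw [mem_interior_iff_mem_nhds, Metric.mem_nhds_iff] at hx0
    obtain ⟨ε, hε, hball⟩ := hx0
    set t : Fin d → ℝ := fun k => ε / (2 * ‖b k‖) with ht
    have hbne : ∀ k : Fin d, (0:ℝ) < ‖b k‖ := fun k => norm_pos_iff.mpr (b.ne_zero k)
    have htpos : ∀ k, 0 < t k := by
      intro k
      have := hbne k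
      positivity
    have hmem : (fun k => x0 + t k • b k, fun _ => x0) ∈ S := by
      constructor
      · intro k _
        apply hball
        have h1 : ‖x0 + t k • b k - x0‖ = t k * ‖b k‖ := by
          rw [add_sub_cancel_left, norm_smul, Real.norm_of_nonneg (htpos k).le]
        have h2 : t k * ‖b k‖ = ε / 2 := by
          have := (hbne k).ne'
          rw [ht]
          field_simp
        simp only [Metric.mem_ball, dist_eq_norm, h1, h2]
        linarith
      · intro k _
        apply hball
        simp [Metric.mem_ball, hε]
    have hval : Δ (fun k => x0 + t k • b k, fun _ => x0) = ∏ k, t k := by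
      have he : (fun k => (x0 + t k • b k) - x0) = fun k => t k • b k := by
        funext k; abel
      show b.det (fun k => (x0 + t k • b k) - x0) = _
      rw [he]
      have h5 := b.det.toMultilinearMap.map_smul_univ t (fun k => b k)
      simpa [Basis.det_self, smul_eq_mul] using h5
    have hle : Δ (fun k => x0 + t k • b k, fun _ => x0) ≤ Δ (P, Q) := hmax hmem
    rw [hval, hΔPQ] at hle
    have hprod : 0 < ∏ k, t k := Finset.prod_pos (fun k _ => htpos k)
    linarith
  set f : Fin d → (E →L[ℝ] ℝ) := fun k =>
    LinearMap.toContinuousLinearMap (b.det.toMultilinearMap.toLinearMap c k) with hf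
  have hfapply : ∀ (k : Fin d) (x : E), f k x = b.det (Function.update c k x) := fun k x => rfl
  have hfc : ∀ k, f k (c k) = D := by
    intro k
    rw [hfapply, Function.update_eq_self]
  have hfc0 : ∀ k j, j ≠ k → f k (c j) = 0 := by
    intro k j hjk
    rw [hfapply]
    exact b.det.map_eq_zero_of_eq _ (by simp [Function.update_of_ne hjk]) hjk
  have hmaxk : ∀ k, ∀ p ∈ K, f k p ≤ f k (P k) := by
    intro k p hp
    have hmem : (Function.update P k p, Q) ∈ S := by
      refine ⟨fun i _ => ?_, fun i _ => hQ i⟩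
      rcases eq_or_ne i k with rfl | h
      · simpa using hp
      · simpa [Function.update_of_ne h] using hP i
    have hle : Δ (Function.update P k p, Q) ≤ Δ (P, Q) := hmax hmem
    have he : (fun i => Function.update P k p i - Q i) = Function.update c k (p - Q k) := by
      funext i
      rcases eq_or_ne i k with rfl | h
      · simp
      · simp [Function.update_of_ne h, hc]
    have hval : Δ (Function.update P k p, Q) = f k p - f k (Q k) := by
      show b.det (fun i => Function.update P k p i - Q i) = _
      rw [he, ← map_sub (f k)]
      exact (hfapply k _).symm
    rw [hval, hΔPQ] at hle
    have hD2 : D = f k (P k) - f k (Q k) := by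
      rw [← hfc k]
      show f k (P k - Q k) = _
      rw [map_sub]
    linarith
  have hmink : ∀ k, ∀ p ∈ K, f k (Q k) ≤ f k p := by
    intro k p hp
    have hmem : (P, Function.update Q k p) ∈ S := by
      refine ⟨fun i _ => hP i, fun i _ => ?_⟩
      rcases eq_or_ne i k with rfl | h
      · simpa using hp
      · simpa [Function.update_of_ne h] using hQ i
    have hle : Δ (P, Function.update Q k p) ≤ Δ (P, Q) := hmax hmem
    have he : (fun i => P i - Function.update Q k p i) = Function.update c k (P k - p) := by
      funext i
      rcases eq_or_ne i k with rfl | h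
      · simp
      · simp [Function.update_of_ne h, hc]
    have hval : Δ (P, Function.update Q k p) = f k (P k) - f k p := by
      show b.det (fun i => P i - Function.update Q k p i) = _
      rw [he, ← map_sub (f k)]
      exact (hfapply k _).symm
    rw [hval, hΔPQ] at hle
    have hD2 : D = f k (P k) - f k (Q k) := by
      rw [← hfc k]
      show f k (P k - Q k) = _
      rw [map_sub]
    linarith
  refine ⟨c, f, P, Q, hP, hQ, ?_, ?_, hfc0, hmaxk, hmink⟩
  · intro k
    show P k = Q k + (P k - Q k)
    abel
  · intro k
    rw [hfc k]
    exact hDpos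

/-- For every convex body `K` in `ℝ^d`, the separable Hadwiger number is at least `2d`:
there are `2d` translates of `K`, all touching `K` and pairwise non-overlapping, such
that any two members of the family consisting of `K` and these translates are separated
by a hyperplane `{f = a}` disjoint from the interiors of all members. -/
theorem separable_hadwiger_number_ge_two_dim {d : ℕ}
    (K : Set (EuclideanSpace ℝ (Fin d)))
    (hconv : Convex ℝ K) (hcomp : IsCompact K) (hint : (interior K).Nonempty) :
    ∃ c : Fin (2 * d) → EuclideanSpace ℝ (Fin d),
      (∀ i, ((c i +ᵥ K) ∩ K).Nonempty ∧
        Disjoint (interior (c i +ᵥ K)) (interior K)) ∧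
      (∀ i j, i ≠ j →
        Disjoint (interior (c i +ᵥ K)) (interior (c j +ᵥ K))) ∧
      (∀ i, ∃ (f : EuclideanSpace ℝ (Fin d) →L[ℝ] ℝ) (a : ℝ), f ≠ 0 ∧
        (∀ x ∈ K, f x ≤ a) ∧ (∀ x ∈ c i +ᵥ K, a ≤ f x) ∧
        (∀ x ∈ interior K, f x ≠ a) ∧
        (∀ j, ∀ x ∈ interior (c j +ᵥ K), f x ≠ a)) ∧
      (∀ i j, i ≠ j → ∃ (f : EuclideanSpace ℝ (Fin d) →L[ℝ] ℝ) (a : ℝ), f ≠ 0 ∧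
        (∀ x ∈ c i +ᵥ K, f x ≤ a) ∧ (∀ x ∈ c j +ᵥ K, a ≤ f x) ∧
        (∀ x ∈ interior K, f x ≠ a) ∧
        (∀ k, ∀ x ∈ interior (c k +ᵥ K), f x ≠ a)) := by
  classical
  obtain ⟨c', f', P, Q, hP, hQ, hPQ, hDpos, horth, hmaxk, hmink⟩ :=
    exists_conjugate_system (finrank_euclideanSpace_fin (n := d)) hcomp hint
  -- abbreviations (inline): M k = f' k (P k), m k = f' k (Q k), D k = f' k (c' k)
  have hMm : ∀ k, f' k (P k) = f' k (Q k) + f' k (c' k) := by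
    intro k
    rw [hPQ k, map_add]
  -- strict bounds on the interior
  have hMint : ∀ k, ∀ x ∈ interior K, f' k x < f' k (P k) := fun k x hx =>
    strict_lt_of_interior' (hDpos k) (hmaxk k) hx
  have hmint : ∀ k, ∀ x ∈ interior K, f' k (Q k) < f' k x := by
    intro k x hx
    have h1 : (0:ℝ) < (-(f' k)) (-(c' k)) := by simpa using hDpos k
    have h2 : ∀ y ∈ K, (-(f' k)) y ≤ -(f' k (Q k)) := fun y hy => by
      simpa using neg_le_neg (hmink k y hy)
    have h3 := strict_lt_of_interior' h1 h2 hx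
    simp only [ContinuousLinearMap.neg_apply] at h3
    linarith
  -- index bookkeeping
  obtain ⟨κ, s, hs1, hinj⟩ : ∃ (κ : Fin (2*d) → Fin d) (s : Fin (2*d) → ℝ),
      (∀ i, s i = 1 ∨ s i = -1) ∧ (∀ i j, κ i = κ j → s i = s j → i = j) := by
    refine ⟨fun i => if h : (i:ℕ) < d then ⟨i, h⟩ else ⟨(i:ℕ) - d, by have := i.isLt; omega⟩,
      fun i => if (i:ℕ) < d then 1 else -1, fun i => ?_, fun i j hk hs => ?_⟩
    · dsimp only
      split_ifs <;> simp
    · by_cases hi : (i:ℕ) < d <;> by_cases hj : (j:ℕ) < d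
      · simp only [dif_pos hi, dif_pos hj] at hk
        have := congrArg Fin.val hk
        simp only at this
        exact Fin.ext this
      · simp only [if_pos hi, if_neg hj] at hs
        norm_num at hs
      · simp only [if_neg hi, if_pos hj] at hs
        norm_num at hs
      · simp only [dif_neg hi, dif_neg hj] at hk
        have := congrArg Fin.val hk
        simp only at this
        exact Fin.ext (by omega)
  have hs2 : ∀ i, s i * s i = 1 := fun i => by
    rcases hs1 i with h | h <;> rw [h] <;> norm_num
  obtain ⟨c, hci⟩ : ∃ c : Fin (2*d) → EuclideanSpace ℝ (Fin d),
      ∀ i, c i = s i • c' (κ i) := ⟨_, fun _ => rfl⟩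
  have hfc : ∀ (k : Fin d) (i), f' k (c i) = s i * (if κ i = k then f' k (c' k) else 0) := by
    intro k i
    rw [hci, map_smul, smul_eq_mul]
    congr 1
    by_cases h : κ i = k
    · rw [if_pos h, h]
    · rw [if_neg h]
      exact horth k (κ i) h
  have hself : ∀ i, s i * f' (κ i) (c i) = f' (κ i) (c' (κ i)) := by
    intro i
    rw [hfc (κ i) i, if_pos rfl, ← mul_assoc, hs2 i, one_mul]
  have hcross : ∀ i j, i ≠ j → s j * f' (κ j) (c i) ≤ 0 := by
    intro i j hij
    rw [hfc (κ j) i]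
    by_cases h : κ i = κ j
    · rw [if_pos h]
      have hsne : s i ≠ s j := fun hs' => hij (hinj i j h hs')
      have hD := hDpos (κ j)
      rcases hs1 i with h1 | h1 <;> rcases hs1 j with h2 | h2 <;>
        first
          | (exact absurd (h1.trans h2.symm) hsne)
          | (rw [h1, h2]; linarith)
    · rw [if_neg h]
      simp
  have hivadd : ∀ (t : EuclideanSpace ℝ (Fin d)), interior (t +ᵥ K) = t +ᵥ interior K :=
    fun t => interior_vadd t K
  -- the hyperplanes avoid all interiors
  have havoid : ∀ (k : Fin d) (a : ℝ), (a = f' k (P k) ∨ a = f' k (Q k)) →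
      (∀ x ∈ interior K, f' k x ≠ a) ∧
      (∀ i, ∀ x ∈ interior (c i +ᵥ K), f' k x ≠ a) := by
    intro k a ha
    constructor
    · intro x hx
      have h1 := hMint k x hx
      have h2 := hmint k x hx
      rcases ha with rfl | rfl <;> intro hEq <;> linarith
    · intro i x hx
      rw [hivadd] at hx
      obtain ⟨y, hy, rfl⟩ := Set.mem_vadd_set.mp hx
      have h1 := hMint k y hy
      have h2 := hmint k y hy
      have hD := hDpos k
      have hMk := hMm k
      have h3 : f' k (c i +ᵥ y) = f' k y + s i * (if κ i = k then f' k (c' k) else 0) := by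
        rw [vadd_eq_add, map_add, hfc k i]
        ring
      rw [h3]
      rcases hs1 i with h4 | h4 <;> rcases ha with rfl | rfl <;> rw [h4] <;>
        split_ifs <;> intro hEq <;> linarith
  -- separating functionals
  have hSEP : ∀ (k : Fin d) (σ : ℝ), σ = 1 ∨ σ = -1 →
      ∃ (F : EuclideanSpace ℝ (Fin d) →L[ℝ] ℝ) (A : ℝ), F ≠ 0 ∧
        (∀ t, σ * f' k t ≤ 0 → ∀ x ∈ t +ᵥ K, F x ≤ A) ∧
        (∀ t, f' k (c' k) ≤ σ * f' k t → ∀ x ∈ t +ᵥ K, A ≤ F x) ∧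
        (∀ x ∈ interior K, F x ≠ A) ∧
        (∀ i, ∀ x ∈ interior (c i +ᵥ K), F x ≠ A) := by
    intro k σ hσ
    refine ⟨σ • f' k, if σ = 1 then f' k (P k) else -(f' k (Q k)), ?_, ?_, ?_, ?_, ?_⟩
    · intro hF
      have h0 : (σ • f' k) (c' k) = 0 := by rw [hF]; rfl
      rw [ContinuousLinearMap.smul_apply, smul_eq_mul] at h0
      have hD := hDpos k
      rcases hσ with rfl | rfl <;> linarith
    · intro t ht x hx
      obtain ⟨y, hy, rfl⟩ := Set.mem_vadd_set.mp hx
      have h1 := hmaxk k y hy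
      have h2 := hmink k y hy
      simp only [ContinuousLinearMap.smul_apply, vadd_eq_add, map_add, smul_eq_mul]
      rcases hσ with rfl | rfl
      · rw [if_pos rfl]
        linarith
      · rw [if_neg (by norm_num)]
        linarith
    · intro t ht x hx
      obtain ⟨y, hy, rfl⟩ := Set.mem_vadd_set.mp hx
      have h1 := hmaxk k y hy
      have h2 := hmink k y hy
      have hMk := hMm k
      simp only [ContinuousLinearMap.smul_apply, vadd_eq_add, map_add, smul_eq_mul]
      rcases hσ with rfl | rfl
      · rw [if_pos rfl]
        linarith
      · rw [if_neg (by norm_num)]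
        linarith
    · intro x hx
      have hM' := (havoid k (f' k (P k)) (Or.inl rfl)).1 x hx
      have hm' := (havoid k (f' k (Q k)) (Or.inr rfl)).1 x hx
      rcases hσ with rfl | rfl
      · simpa using hM'
      · simp only [ContinuousLinearMap.smul_apply, smul_eq_mul]
        rw [if_neg (by norm_num)]
        intro h
        exact hm' (by linarith)
    · intro i x hx
      have hM' := (havoid k (f' k (P k)) (Or.inl rfl)).2 i x hx
      have hm' := (havoid k (f' k (Q k)) (Or.inr rfl)).2 i x hx
      rcases hσ with rfl | rfl
      · simpa using hM'
      · simp only [ContinuousLinearMap.smul_apply, smul_eq_mul]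
        rw [if_neg (by norm_num)]
        intro h
        exact hm' (by linarith)
  -- separation from K
  have hsepK : ∀ i, ∃ (f : EuclideanSpace ℝ (Fin d) →L[ℝ] ℝ) (a : ℝ), f ≠ 0 ∧
      (∀ x ∈ K, f x ≤ a) ∧ (∀ x ∈ c i +ᵥ K, a ≤ f x) ∧
      (∀ x ∈ interior K, f x ≠ a) ∧
      (∀ j, ∀ x ∈ interior (c j +ᵥ K), f x ≠ a) := by
    intro i
    obtain ⟨F, A, hF0, hFle, hFge, hFint, hFintj⟩ := hSEP (κ i) (s i) (hs1 i)
    refine ⟨F, A, hF0, ?_, ?_, hFint, hFintj⟩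
    · intro x hx
      refine hFle 0 (by simp) x ?_
      exact Set.mem_vadd_set.mpr ⟨x, hx, zero_vadd _ x⟩
    · intro x hx
      exact hFge (c i) (le_of_eq (hself i).symm) x hx
  -- separation between two translates
  have hsepIJ : ∀ i j, i ≠ j → ∃ (f : EuclideanSpace ℝ (Fin d) →L[ℝ] ℝ) (a : ℝ), f ≠ 0 ∧
      (∀ x ∈ c i +ᵥ K, f x ≤ a) ∧ (∀ x ∈ c j +ᵥ K, a ≤ f x) ∧
      (∀ x ∈ interior K, f x ≠ a) ∧
      (∀ k, ∀ x ∈ interior (c k +ᵥ K), f x ≠ a) := by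
    intro i j hij
    obtain ⟨F, A, hF0, hFle, hFge, hFint, hFintj⟩ := hSEP (κ j) (s j) (hs1 j)
    exact ⟨F, A, hF0, fun x hx => hFle (c i) (hcross i j hij) x hx,
      fun x hx => hFge (c j) (le_of_eq (hself j).symm) x hx, hFint, hFintj⟩
  -- disjointness from separation
  have hdisj : ∀ (A B : Set (EuclideanSpace ℝ (Fin d))) (F : EuclideanSpace ℝ (Fin d) →L[ℝ] ℝ)
      (a : ℝ), (∀ x ∈ A, F x ≤ a) → (∀ x ∈ B, a ≤ F x) →
      (∀ x ∈ interior A, F x ≠ a) →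
      Disjoint (interior A) (interior B) := by
    intro A B F a h1 h2 h3
    rw [Set.disjoint_left]
    intro x hxA hxB
    exact h3 x hxA (le_antisymm (h1 x (interior_subset hxA)) (h2 x (interior_subset hxB)))
  refine ⟨c, ?_, ?_, hsepK, hsepIJ⟩
  · intro i
    constructor
    · -- touching
      rcases hs1 i with h | h
      · refine ⟨P (κ i), Set.mem_vadd_set.mpr ⟨Q (κ i), hQ (κ i), ?_⟩, hP (κ i)⟩
        rw [vadd_eq_add, hci, h, one_smul, add_comm]
        exact (hPQ (κ i)).symm
      · refine ⟨Q (κ i), Set.mem_vadd_set.mpr ⟨P (κ i), hP (κ i), ?_⟩, hQ (κ i)⟩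
        rw [vadd_eq_add, hci, h, neg_smul, one_smul, hPQ (κ i)]
        abel
    · -- disjoint from K
      obtain ⟨F, A, hF0, hFle, hFge, hFint, hFintj⟩ := hsepK i
      exact (hdisj K (c i +ᵥ K) F A hFle hFge hFint).symm
  · intro i j hij
    obtain ⟨F, A, hF0, hFle, hFge, hFint, hFintj⟩ := hsepIJ i j hij
    exact hdisj (c i +ᵥ K) (c j +ᵥ K) F A hFle hFge (hFintj i)
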